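/- Let A be a unital associative k-algebra free as a k-module on a basis B with φ_α φ_β = μ_{α,β} φ_m where each structure constant μ_{α,β} ∈ k is idempotent (μ² = μ). Then the map Ψ : Hom_k(A^{⊗n}, k) → AP(A^{⊗n}, A), defined by Ψ(α)(φ_1 ⊗ ⋯ ⊗ φ_n) = α(φ_1 ⊗ ⋯ ⊗ φ_n)·(φ_1 φ_2 ⋯ φ_n), satisfies δ ∘ Ψ = Ψ ∘ d^* for all n ≥ 1, i.e., Ψ is a cochain map from the simplicial cochain complex of the bar construction to the autopoietic Hochschild cochains. -/

import Mathlib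

variable {k A B : Type} [CommRing k] [Ring A] [Algebra k A]

/-- Hochschild cochains `Hom_k(A^{⊗n}, A)` for `A` free on the basis `B`, modeled by
their values on tuples of basis elements. -/
abbrev ACochain (A B : Type) (n : ℕ) : Type := (Fin n → B) → A

/-- Simplicial cochains `Hom_k(A^{⊗n}, k)`, modeled by values on tuples of basis
elements. -/
abbrev SCochain (k B : Type) (n : ℕ) : Type := (Fin n → B) → k

/-- The ordered product `φ_1 φ_2 ⋯ φ_n ∈ A` of a tuple of basis elements. -/
noncomputable def aprod (bas : Module.Basis B k A) {n : ℕ} (φ : Fin n → B) : A :=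
  (List.ofFn fun i => bas (φ i)).prod

/-- A cochain is (strictly) autopoietic if
`f(φ_1 ⊗ ⋯ ⊗ φ_n) = λ_{φ_1,…,φ_n} · (φ_1 φ_2 ⋯ φ_n)` for all basis elements `φ_i`. -/
def IsAP (bas : Module.Basis B k A) {n : ℕ} (f : ACochain A B n) : Prop :=
  ∀ φ : Fin n → B, ∃ c : k, f φ = c • aprod bas φ

/-- Merge the `i`-th and `(i+1)`-st entries of a tuple of basis elements using the
basis-level product `m`. -/
def bmerge (m : B → B → B) {n : ℕ} (φ : Fin (n + 1) → B) (i : Fin n) : Fin n → B := fun j =>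
  if (j : ℕ) < i then φ j.castSucc
  else if (j : ℕ) = i then m (φ j.castSucc) (φ j.succ)
  else φ j.succ

/-- The Hochschild coboundary, expressed via the structure constants
`φ_α φ_β = μ_{α,β} φ_{m(α,β)}`. -/
noncomputable def adelta (bas : Module.Basis B k A) (μ : B → B → k) (m : B → B → B) (n : ℕ) :
    ACochain A B n →ₗ[k] ACochain A B (n + 1) :=
  (LinearMap.pi fun φ =>
      (LinearMap.mulLeft k (bas (φ 0))).comp (LinearMap.proj (Fin.tail φ)))
  + (∑ i : Fin n, LinearMap.pi fun φ =>
      (((-1 : k) ^ ((i : ℕ) + 1)) * μ (φ i.castSucc) (φ i.succ)) •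
        (LinearMap.proj (bmerge m φ i) : ACochain A B n →ₗ[k] A))
  + ((-1 : k) ^ (n + 1)) •
      LinearMap.pi fun φ =>
        (LinearMap.mulRight k (bas (φ (Fin.last n)))).comp (LinearMap.proj (Fin.init φ))

/-- `Ψ(α)(φ_1 ⊗ ⋯ ⊗ φ_n) = α(φ_1 ⊗ ⋯ ⊗ φ_n)·(φ_1 φ_2 ⋯ φ_n)`. -/
noncomputable def PsiA (bas : Module.Basis B k A) {n : ℕ} (α : SCochain k B n) : ACochain A B n :=
  fun φ => α φ • aprod bas φ

/-- The `i`-th face of the bar construction on basis tuples (`d_0` drops the first entry,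
`d_i` multiplies adjacent entries via `m`, the last face drops the last entry). -/
def barFaceB (m : B → B → B) {n : ℕ} (i : ℕ) (φ : Fin (n + 1) → B) : Fin n → B := fun j =>
  if (j : ℕ) + 1 < i then φ j.castSucc
  else if (j : ℕ) + 1 = i then m (φ j.castSucc) (φ j.succ)
  else φ j.succ

/-- The structure-constant coefficient produced by the `i`-th bar face. -/
def barCoef (μ : B → B → k) {n : ℕ} (i : ℕ) (φ : Fin (n + 1) → B) : k :=
  if h : 1 ≤ i ∧ i ≤ n then
    μ (φ ⟨i - 1, by omega⟩) (φ ⟨i, by omega⟩)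
  else 1

/-- The simplicial coboundary `d^*`, the `Hom_k(-,k)`-dual of the bar differential
`d = Σ (-1)^i d_i`. -/
noncomputable def dstarA (μ : B → B → k) (m : B → B → B) (n : ℕ) :
    SCochain k B n →ₗ[k] SCochain k B (n + 1) :=
  ∑ i ∈ Finset.range (n + 2), LinearMap.pi fun φ =>
    (((-1 : k) ^ i) * barCoef μ i φ) •
      (LinearMap.proj (barFaceB m i φ) : SCochain k B n →ₗ[k] k)

lemma aprod_succ (bas : Module.Basis B k A) {n : ℕ} (φ : Fin (n+1) → B) :
    aprod bas φ = bas (φ 0) * aprod bas (Fin.tail φ) := by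
  simp [aprod, List.ofFn_succ, Fin.tail]

lemma aprod_init (bas : Module.Basis B k A) {n : ℕ} (φ : Fin (n+1) → B) :
    aprod bas φ = aprod bas (Fin.init φ) * bas (φ (Fin.last n)) := by
  simp only [aprod, List.ofFn_succ', List.concat_eq_append, List.prod_append,
    List.prod_cons, List.prod_nil, mul_one]
  rfl

lemma tail_bmerge_succ (m : B → B → B) {n : ℕ} (φ : Fin (n+2) → B) (i : Fin n) :
    Fin.tail (bmerge m φ i.succ) = bmerge m (Fin.tail φ) i := by
  funext j
  simp only [Fin.tail, bmerge, Fin.val_succ, Nat.add_lt_add_iff_right,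
    Nat.add_right_cancel_iff, ← Fin.succ_castSucc]

lemma bmerge_succ_zero (m : B → B → B) {n : ℕ} (φ : Fin (n+2) → B) (i : Fin n) :
    bmerge m φ i.succ 0 = φ 0 := by
  simp [bmerge]

lemma tail_bmerge_zero (m : B → B → B) {n : ℕ} (φ : Fin (n+2) → B) :
    Fin.tail (bmerge m φ 0) = Fin.tail (Fin.tail φ) := by
  funext j
  simp [Fin.tail, bmerge, Nat.succ_ne_zero]

lemma bmerge_zero_zero (m : B → B → B) {n : ℕ} (φ : Fin (n+2) → B) :
    bmerge m φ 0 0 = m (φ 0) (φ 1) := by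
  simp [bmerge]

lemma aprod_bmerge (bas : Module.Basis B k A) (μ : B → B → k) (m : B → B → B)
    (hmul : ∀ a b : B, bas a * bas b = μ a b • bas (m a b)) :
    ∀ {n : ℕ} (φ : Fin (n+1) → B) (i : Fin n),
      aprod bas φ = μ (φ i.castSucc) (φ i.succ) • aprod bas (bmerge m φ i) := by
  intro n
  induction n with
  | zero => exact fun φ i => i.elim0
  | succ n ih =>
    intro φ i
    induction i using Fin.cases with
    | zero =>
      rw [aprod_succ, aprod_succ bas (Fin.tail φ), ← mul_assoc, hmul,
        aprod_succ bas (bmerge m φ 0), bmerge_zero_zero, tail_bmerge_zero]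
      simp only [Fin.tail, smul_mul_assoc]
      rfl
    | succ i =>
      rw [aprod_succ, ih (Fin.tail φ) i, aprod_succ bas (bmerge m φ i.succ),
        bmerge_succ_zero, tail_bmerge_succ, mul_smul_comm]
      simp only [Fin.tail, Fin.succ_castSucc]

lemma barFaceB_zero (m : B → B → B) {n : ℕ} (φ : Fin (n+1) → B) :
    barFaceB m 0 φ = Fin.tail φ := by
  funext j; simp [barFaceB, Fin.tail]

lemma barFaceB_last (m : B → B → B) {n : ℕ} (φ : Fin (n+1) → B) :
    barFaceB m (n+1) φ = Fin.init φ := by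
  funext j
  simp only [barFaceB, Fin.init]
  rw [if_pos (by omega)]

lemma barFaceB_succ (m : B → B → B) {n : ℕ} (φ : Fin (n+1) → B) (i : Fin n) :
    barFaceB m ((i : ℕ) + 1) φ = bmerge m φ i := by
  funext j
  simp only [barFaceB, bmerge, Nat.add_lt_add_iff_right, Nat.add_right_cancel_iff]

lemma barCoef_zero (μ : B → B → k) {n : ℕ} (φ : Fin (n+1) → B) :
    barCoef μ 0 φ = 1 := by
  simp [barCoef]

lemma barCoef_last (μ : B → B → k) {n : ℕ} (φ : Fin (n+1) → B) :
    barCoef μ (n+1) φ = 1 := by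
  rw [barCoef, dif_neg (by omega)]

lemma barCoef_succ (μ : B → B → k) {n : ℕ} (φ : Fin (n+1) → B) (i : Fin n) :
    barCoef μ ((i : ℕ) + 1) φ = μ (φ i.castSucc) (φ i.succ) := by
  rw [barCoef, dif_pos ⟨by omega, by omega⟩]
  congr 1

/-- When the structure constants `μ_{α,β}` are idempotent, the map `Ψ`
is a cochain map from the simplicial cochain complex of the bar construction to the
autopoietic Hochschild cochains: `δ ∘ Ψ = Ψ ∘ d^*` in all degrees `n ≥ 1`
(moreover `Ψ(α)` is always autopoietic). -/
theorem stmt_10 (bas : Module.Basis B k A) (μ : B → B → k) (m : B → B → B)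
    (hmul : ∀ a b : B, bas a * bas b = μ a b • bas (m a b))
    (hidem : ∀ a b : B, μ a b * μ a b = μ a b) :
    (∀ (n : ℕ) (α : SCochain k B n), IsAP bas (PsiA bas α)) ∧
    (∀ (n : ℕ) (α : SCochain k B (n + 1)),
      adelta bas μ m (n + 1) (PsiA bas α) = PsiA bas (dstarA μ m (n + 1) α)) := by
  constructor
  · exact fun n α φ => ⟨α φ, rfl⟩
  · intro n α
    funext φ
    simp only [adelta, dstarA, PsiA, LinearMap.add_apply, Pi.add_apply,
      LinearMap.pi_apply, LinearMap.comp_apply, LinearMap.proj_apply,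
      LinearMap.mulLeft_apply, LinearMap.mulRight_apply, LinearMap.sum_apply,
      Finset.sum_apply, LinearMap.smul_apply, Pi.smul_apply, smul_eq_mul]
    rw [Finset.sum_range_succ, Finset.sum_range_succ', add_smul, add_smul,
      Finset.sum_smul, ← Fin.sum_univ_eq_sum_range
        (fun x => ((-1:k) ^ (x+1) * barCoef μ (x+1) φ * α (barFaceB m (x+1) φ)) • aprod bas φ)]
    have h1 : bas (φ 0) * α (Fin.tail φ) • aprod bas (Fin.tail φ)
        = ((-1:k) ^ 0 * barCoef μ 0 φ * α (barFaceB m 0 φ)) • aprod bas φ := by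
      rw [barCoef_zero, barFaceB_zero, mul_smul_comm, ← aprod_succ]
      congr 1; ring
    have h3 : (-1:k) ^ (n + 1 + 1) • (α (Fin.init φ) • aprod bas (Fin.init φ)
          * bas (φ (Fin.last (n + 1))))
        = ((-1:k) ^ (n + 1 + 1) * barCoef μ (n + 1 + 1) φ * α (barFaceB m (n + 1 + 1) φ))
            • aprod bas φ := by
      rw [barCoef_last, barFaceB_last, smul_mul_assoc, ← aprod_init, smul_smul]
      congr 1; ring
    have h2 : ∑ x : Fin (n + 1),
          ((-1:k) ^ ((x:ℕ) + 1) * μ (φ x.castSucc) (φ x.succ)) •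
            (α (bmerge m φ x) • aprod bas (bmerge m φ x))
        = ∑ x : Fin (n + 1),
          ((-1:k) ^ ((x:ℕ) + 1) * barCoef μ ((x:ℕ) + 1) φ * α (barFaceB m ((x:ℕ) + 1) φ))
            • aprod bas φ := by
      refine Finset.sum_congr rfl fun x _ => ?_
      rw [barCoef_succ, barFaceB_succ, smul_smul, aprod_bmerge bas μ m hmul φ x, smul_smul]
      congr 1
      linear_combination ((-1:k) ^ ((x:ℕ)) * α (bmerge m φ x)) *
        hidem (φ x.castSucc) (φ x.succ)
    rw [h1, h2, h3]
    abel
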